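/- The element q = Σ_{a≠b, b∉{a+1,a-1}} x_a x_b − Σ_{k∈Z/5Z} x_k^2 of S^2(V) (with V = Q^5, basis x_0,...,x_4) pairs to zero with every element of I_2 under the standard pairing; equivalently, under the quotient map S^2(V) → S^2(V)/I_2 ≅ Q, the functional vanishing on I_2 is (up to scalar) determined by q. -/
import Mathlib


open MvPolynomial

/-- The quadratic Keel relations for `M̄_{0,5}` in the side variables `x_i`, `i ∈ ℤ/5ℤ`. -/
noncomputable def keelRels5 : Set (MvPolynomial (ZMod 5) ℚ) :=
  {p | ∃ i : ZMod 5, p = X i * X (i + 1)} ∪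
  {p | ∃ i k : ZMod 5, (k = i ∨ k = i - 1 ∨ k = i + 2 ∨ k = i + 3) ∧
      p = (X i + X (i + 2) - X (i + 1)) * X k}


/-- The standard monomial pairing on polynomials (dual basis of monomials):
`⟨p, q⟩ = Σ_m coeff_m(p) · coeff_m(q)`. -/
noncomputable def monPair (p q : MvPolynomial (ZMod 5) ℚ) : ℚ :=
  ∑ m ∈ p.support, MvPolynomial.coeff m p * MvPolynomial.coeff m q

/-- The element `q = Σ_{nonadjacent pairs {a,b}} x_a x_b − Σ_k x_k²` of `S²(V)`;
the nonadjacent unordered pairs mod 5 are exactly `{a, a+2}` for `a ∈ ℤ/5ℤ`. -/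
noncomputable def qElt : MvPolynomial (ZMod 5) ℚ :=
  (∑ a : ZMod 5, X a * X (a + 2)) - ∑ k : ZMod 5, X k ^ 2

noncomputable def e (a b : ZMod 5) : ZMod 5 →₀ ℕ := Finsupp.single a 1 + Finsupp.single b 1

lemma XX (a b : ZMod 5) : (X a * X b : MvPolynomial (ZMod 5) ℚ) = monomial (e a b) 1 := by
  rw [X, X, monomial_mul, one_mul, e]

lemma e_apply (a b x : ZMod 5) : (e a b) x = (if a = x then 1 else 0) + (if b = x then 1 else 0) := by
  simp [e, Finsupp.single_apply]

lemma e_aa (a : ZMod 5) : e a a = Finsupp.single a 2 := by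
  rw [e, ← Finsupp.single_add]

lemma e_eq_iff {a b c d : ZMod 5} (hab : a ≠ b) (hcd : c ≠ d) :
    e a b = e c d ↔ (a = c ∧ b = d) ∨ (a = d ∧ b = c) := by
  constructor
  · intro h
    have hc := DFunLike.congr_fun h c
    have hd := DFunLike.congr_fun h d
    rw [e_apply, e_apply] at hc hd
    simp only [if_pos rfl, if_neg (Ne.symm hcd), if_neg hcd] at hc hd
    split_ifs at hc hd with h1 h2 h3 h4 <;> simp_all
  · rintro (⟨rfl, rfl⟩ | ⟨rfl, rfl⟩)
    · rfl
    · rw [e, e, add_comm]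

lemma single2_ne_e {a b : ZMod 5} (hab : a ≠ b) (k : ZMod 5) : Finsupp.single k 2 ≠ e a b := by
  intro h
  have hk := DFunLike.congr_fun h k
  rw [e_apply, Finsupp.single_apply, if_pos rfl] at hk
  split_ifs at hk with h1 h2 <;> simp_all


lemma coeff_qElt (a b : ZMod 5) :
    coeff (e a b) qElt =
      (if b = a + 2 ∨ a = b + 2 then 1 else 0) - (if a = b then 1 else 0) := by
  have hne : ∀ t : ZMod 5, t ≠ t + 2 := by decide
  have key : ∀ m : ZMod 5 →₀ ℕ, coeff m qElt =
      (∑ t : ZMod 5, if e t (t + 2) = m then (1:ℚ) else 0)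
      - ∑ k : ZMod 5, if Finsupp.single k 2 = m then (1:ℚ) else 0 := by
    intro m
    rw [qElt, coeff_sub, coeff_sum, coeff_sum]
    congr 1
    · exact Finset.sum_congr rfl fun t _ => by rw [XX, coeff_monomial]
    · exact Finset.sum_congr rfl fun k _ => by rw [X_pow_eq_monomial, coeff_monomial]
  rw [key]
  by_cases hab : a = b
  · subst hab
    rw [if_neg (by simp; decide), if_pos rfl, e_aa]
    have h1 : (∑ t : ZMod 5, if e t (t + 2) = Finsupp.single a 2 then (1:ℚ) else 0) = 0 :=
      Finset.sum_eq_zero fun t _ => if_neg fun h => single2_ne_e (hne t) a h.symm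
    have h2 : (∑ k : ZMod 5, if Finsupp.single k 2 = Finsupp.single a 2 then (1:ℚ) else 0) = 1 := by
      calc (∑ k : ZMod 5, if Finsupp.single k 2 = Finsupp.single a 2 then (1:ℚ) else 0)
          = ∑ k : ZMod 5, if k = a then (1:ℚ) else 0 :=
            Finset.sum_congr rfl fun k _ =>
              if_congr (Finsupp.single_left_inj (by norm_num : (2:ℕ) ≠ 0)) rfl rfl
        _ = 1 := by rw [Finset.sum_ite_eq' Finset.univ a (fun _ => (1:ℚ))]; simp
    rw [h1, h2]
  · have h2 : (∑ k : ZMod 5, if Finsupp.single k 2 = e a b then (1:ℚ) else 0) = 0 :=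
      Finset.sum_eq_zero fun k _ => if_neg (single2_ne_e hab k)
    rw [h2, if_neg hab, sub_zero, sub_zero]
    have cond : ∀ t : ZMod 5, (e t (t + 2) = e a b) ↔
        (t = a ∧ b = a + 2) ∨ (t = b ∧ a = b + 2) := by
      intro t
      rw [e_eq_iff (hne t) hab]
      constructor
      · rintro (⟨rfl, rfl⟩ | ⟨rfl, rfl⟩)
        · exact Or.inl ⟨rfl, rfl⟩
        · exact Or.inr ⟨rfl, rfl⟩
      · rintro (⟨rfl, rfl⟩ | ⟨rfl, rfl⟩)
        · exact Or.inl ⟨rfl, rfl⟩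
        · exact Or.inr ⟨rfl, rfl⟩
    by_cases hb : b = a + 2
    · subst hb
      have ha : ¬ a = a + 2 + 2 := by
        intro h
        nth_rewrite 1 [← add_zero a] at h
        rw [add_assoc] at h
        exact absurd (add_left_cancel h) (by decide)
      rw [if_pos (Or.inl rfl)]
      calc (∑ t : ZMod 5, if e t (t + 2) = e a (a + 2) then (1:ℚ) else 0)
          = ∑ t : ZMod 5, if t = a then (1:ℚ) else 0 :=
            Finset.sum_congr rfl fun t _ => if_congr (by rw [cond]; simp [ha]) rfl rfl
        _ = 1 := by rw [Finset.sum_ite_eq' Finset.univ a (fun _ => (1:ℚ))]; simp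
    · by_cases ha : a = b + 2
      · subst ha
        rw [if_pos (Or.inr rfl)]
        calc (∑ t : ZMod 5, if e t (t + 2) = e (b + 2) b then (1:ℚ) else 0)
            = ∑ t : ZMod 5, if t = b then (1:ℚ) else 0 :=
              Finset.sum_congr rfl fun t _ => if_congr (by rw [cond]; simp [hb]) rfl rfl
          _ = 1 := by rw [Finset.sum_ite_eq' Finset.univ b (fun _ => (1:ℚ))]; simp
      · rw [if_neg (by simp [hb, ha])]
        exact Finset.sum_eq_zero fun t _ => if_neg (by rw [cond]; simp [hb, ha])

lemma monPair_add (p q r : MvPolynomial (ZMod 5) ℚ) :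
    monPair p (q + r) = monPair p q + monPair p r := by
  simp [monPair, coeff_add, mul_add, Finset.sum_add_distrib]

lemma monPair_sub (p q r : MvPolynomial (ZMod 5) ℚ) :
    monPair p (q - r) = monPair p q - monPair p r := by
  simp [monPair, coeff_sub, mul_sub, Finset.sum_sub_distrib]

lemma monPair_smul (p q : MvPolynomial (ZMod 5) ℚ) (c : ℚ) :
    monPair p (c • q) = c * monPair p q := by
  simp [monPair, MvPolynomial.coeff_smul, Finset.mul_sum, mul_comm, mul_left_comm]

lemma monPair_zero (p : MvPolynomial (ZMod 5) ℚ) : monPair p 0 = 0 := by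
  simp [monPair]

lemma monPair_XX (p : MvPolynomial (ZMod 5) ℚ) (a b : ZMod 5) :
    monPair p (X a * X b) = coeff (e a b) p := by
  unfold monPair
  have : ∀ m, coeff m (X a * X b : MvPolynomial (ZMod 5) ℚ)
      = if e a b = m then (1:ℚ) else 0 := fun m => by rw [XX, coeff_monomial]
  simp only [this, mul_ite, mul_one, mul_zero]
  rw [Finset.sum_ite_eq]
  by_cases h : e a b ∈ p.support
  · simp [h]
  · simp [h, MvPolynomial.notMem_support_iff.mp h]

/-- `q` pairs to zero with every element of `I₂` under the standard
monomial pairing, i.e. the dual functional `q*` annihilates `I₂`. -/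
theorem stmt7 :
    ∀ r ∈ Submodule.span ℚ keelRels5, monPair qElt r = 0 := by
  intro r hr
  induction hr using Submodule.span_induction with
  | mem x hx =>
    rcases hx with ⟨i, rfl⟩ | ⟨i, k, hk, rfl⟩
    · rw [monPair_XX, coeff_qElt,
        if_neg ((by decide : ∀ j : ZMod 5, ¬(j + 1 = j + 2 ∨ j = j + 1 + 2)) i),
        if_neg ((by decide : ∀ j : ZMod 5, ¬(j = j + 1)) i)]
      norm_num
    · have expand : (X i + X (i + 2) - X (i + 1)) * X k
          = (X i * X k + X (i + 2) * X k - X (i + 1) * X k : MvPolynomial (ZMod 5) ℚ) := by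
        ring
      rw [expand, monPair_sub, monPair_add, monPair_XX, monPair_XX, monPair_XX,
        coeff_qElt, coeff_qElt, coeff_qElt]
      rcases hk with rfl | rfl | rfl | rfl
      · rw [if_neg ((by decide : ∀ j : ZMod 5, ¬(j = j + 2 ∨ j = j + 2)) k),
          if_pos (rfl : k = k),
          if_pos ((by decide : ∀ j : ZMod 5, j = j + 2 + 2 ∨ j + 2 = j + 2) k),
          if_neg ((by decide : ∀ j : ZMod 5, ¬(j + 2 = j)) k),
          if_neg ((by decide : ∀ j : ZMod 5, ¬(j = j + 1 + 2 ∨ j + 1 = j + 2)) k),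
          if_neg ((by decide : ∀ j : ZMod 5, ¬(j + 1 = j)) k)]
        norm_num
      · rw [if_neg ((by decide : ∀ j : ZMod 5, ¬(j - 1 = j + 2 ∨ j = j - 1 + 2)) i),
          if_neg ((by decide : ∀ j : ZMod 5, ¬(j = j - 1)) i),
          if_pos ((by decide : ∀ j : ZMod 5, j - 1 = j + 2 + 2 ∨ j + 2 = j - 1 + 2) i),
          if_neg ((by decide : ∀ j : ZMod 5, ¬(j + 2 = j - 1)) i),
          if_pos ((by decide : ∀ j : ZMod 5, j - 1 = j + 1 + 2 ∨ j + 1 = j - 1 + 2) i),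
          if_neg ((by decide : ∀ j : ZMod 5, ¬(j + 1 = j - 1)) i)]
        norm_num
      · rw [if_pos ((by decide : ∀ j : ZMod 5, j + 2 = j + 2 ∨ j = j + 2 + 2) i),
          if_neg ((by decide : ∀ j : ZMod 5, ¬(j = j + 2)) i),
          if_neg ((by decide : ∀ j : ZMod 5, ¬(j + 2 = j + 2 + 2 ∨ j + 2 = j + 2 + 2)) i),
          if_pos (rfl : i + 2 = i + 2),
          if_neg ((by decide : ∀ j : ZMod 5, ¬(j + 2 = j + 1 + 2 ∨ j + 1 = j + 2 + 2)) i),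
          if_neg ((by decide : ∀ j : ZMod 5, ¬(j + 1 = j + 2)) i)]
        norm_num
      · rw [if_pos ((by decide : ∀ j : ZMod 5, j + 3 = j + 2 ∨ j = j + 3 + 2) i),
          if_neg ((by decide : ∀ j : ZMod 5, ¬(j = j + 3)) i),
          if_neg ((by decide : ∀ j : ZMod 5, ¬(j + 3 = j + 2 + 2 ∨ j + 2 = j + 3 + 2)) i),
          if_neg ((by decide : ∀ j : ZMod 5, ¬(j + 2 = j + 3)) i),
          if_pos ((by decide : ∀ j : ZMod 5, j + 3 = j + 1 + 2 ∨ j + 1 = j + 3 + 2) i),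
          if_neg ((by decide : ∀ j : ZMod 5, ¬(j + 1 = j + 3)) i)]
        norm_num
  | zero => exact monPair_zero _
  | add x y _ _ hx hy => rw [monPair_add, hx, hy, add_zero]
  | smul c x _ hx => rw [monPair_smul, hx, mul_zero]
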